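/- Let $0 < p < q \leq \infty$ and let $\Psi: (0,1] \to (0,\infty)$ be an admissible function that does not satisfy $\sum_{j\geq 0}\Psi(2^{-j})^{\chi} < \infty$ with $\chi = qp/(q-p)$ (resp. $\chi = p$ if $q = \infty$). If $q < \infty$ and $\Psi$ is increasing, assume additionally $\chi < 1/c_\infty$ where $c_\infty = \sup_{0<t\leq 1}\log_2(\Psi(t)/\Psi(t^2))$. Then there exists a sequence $(\lambda_{j,k})_{j,k\geq 0}$ of nonnegative reals with $\big(\sum_{j\geq 0}\big(\sum_{k\geq 0}\lambda_{j,k}^p\big)^{q/p}\big)^{1/q} < \infty$ and $\big(\sum_{j\geq 0} 2^{jq/p}\lambda_{j,\lfloor 2^jx\rfloor}^q \Psi(2^{-j})^q\big)^{1/q} = \infty$ for every $x \in [1,2)$ (usual modification for $q=\infty$). -/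

import Mathlib

open scoped ENNReal

/-- A positive function on `(0,1]` is *admissible* if it is monotone and satisfies
`Ψ(2^{-j}) ∼ Ψ(2^{-2j})` uniformly in `j ∈ ℕ`. -/
def Admissible (Ψ : ℝ → ℝ) : Prop :=
  (∀ t ∈ Set.Ioc (0 : ℝ) 1, 0 < Ψ t) ∧
    (MonotoneOn Ψ (Set.Ioc (0 : ℝ) 1) ∨ AntitoneOn Ψ (Set.Ioc (0 : ℝ) 1)) ∧
    ∃ c C : ℝ, 0 < c ∧
      ∀ j : ℕ, c * Ψ ((2 : ℝ) ^ (-(2 * j : ℝ))) ≤ Ψ ((2 : ℝ) ^ (-(j : ℝ))) ∧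
        Ψ ((2 : ℝ) ^ (-(j : ℝ))) ≤ C * Ψ ((2 : ℝ) ^ (-(2 * j : ℝ)))

open Finset Filter
set_option maxHeartbeats 2000000

lemma blocks_aux (a : ℕ → ℝ) (ha : ∀ j, 0 ≤ a j) (hdiv : ¬ Summable a) (t : ℕ → ℝ) :
    ∃ n : ℕ → ℕ, n 0 = 1 ∧ StrictMono n ∧
      ∀ m, t m ≤ ∑ j ∈ Finset.Ico (n m) (n (m + 1)), a j := by
  have hT : Tendsto (fun N => ∑ j ∈ Finset.range N, a j) atTop atTop :=
    (not_summable_iff_tendsto_nat_atTop_of_nonneg ha).mp hdiv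
  have key : ∀ C : ℝ, ∀ s : ℕ, ∃ N : ℕ, s < N ∧ C ≤ ∑ j ∈ Finset.Ico s N, a j := by
    intro C s
    obtain ⟨N0, hN0⟩ := eventually_atTop.mp
      (hT.eventually_ge_atTop (C + ∑ j ∈ Finset.range s, a j))
    refine ⟨max N0 (s + 1), by omega, ?_⟩
    have h1 : s ≤ max N0 (s + 1) := by omega
    have h2 := hN0 (max N0 (s + 1)) (le_max_left _ _)
    rw [Finset.sum_Ico_eq_sub _ h1]
    linarith
  choose F hF1 hF2 using key
  exact ⟨fun m => Nat.rec 1 (fun m prev => F (t m) prev) m, rfl,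
    strictMono_nat_of_lt_succ fun m => hF1 _ _, fun m => hF2 _ _⟩

lemma mem_block_aux (n : ℕ → ℕ) (h0 : n 0 = 1) (hmono : StrictMono n) (j : ℕ) (hj : 1 ≤ j) :
    ∃ m, n m ≤ j ∧ j < n (m + 1) := by
  by_contra hc
  push_neg at hc
  have hall : ∀ m, n m ≤ j := by
    intro m
    induction m with
    | zero => omega
    | succ m ih => exact hc m ih
  have h1 := hall (j + 1)
  have h2 : j + 1 ≤ n (j + 1) := hmono.le_apply
  omega

lemma geom_tail_aux (A B : ℕ) (hA : 1 ≤ A) :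
    ∑ i ∈ Finset.Ico A B, ((2:ℝ)⁻¹) ^ i ≤ 1 := by
  have hsub : Finset.Ico A B ⊆ Finset.Ico 1 B := by
    intro i hi
    simp only [Finset.mem_Ico] at hi ⊢
    omega
  have h1 : ∑ i ∈ Finset.Ico A B, ((2:ℝ)⁻¹) ^ i ≤ ∑ i ∈ Finset.Ico 1 B, ((2:ℝ)⁻¹) ^ i :=
    Finset.sum_le_sum_of_subset_of_nonneg hsub (fun i _ _ => by positivity)
  rcases Nat.eq_zero_or_pos B with rfl | hB
  · simp at h1 ⊢
  have h2 : ∑ i ∈ Finset.Ico 0 B, ((2:ℝ)⁻¹) ^ i =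
      ∑ i ∈ Finset.Ico 0 1, ((2:ℝ)⁻¹) ^ i + ∑ i ∈ Finset.Ico 1 B, ((2:ℝ)⁻¹) ^ i :=
    (Finset.sum_Ico_consecutive _ (by omega) (by omega)).symm
  have h3 : ∑ i ∈ Finset.Ico 0 B, ((2:ℝ)⁻¹) ^ i ≤ 2 := by
    rw [← Finset.range_eq_Ico]
    have := geom_sum_eq (by norm_num : ((2:ℝ)⁻¹) ≠ 1) B
    rw [this]
    have hpow : (0:ℝ) ≤ ((2:ℝ)⁻¹) ^ B := by positivity
    rw [div_le_iff_of_neg (by norm_num : ((2:ℝ)⁻¹ - 1) < 0)]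
    linarith
  rw [← Finset.range_eq_Ico] at h2 h3
  simp only [inv_pow] at h1 h2 h3 ⊢
  have h4 : ∑ x ∈ Finset.range 1, (((2:ℝ)) ^ x)⁻¹ = 1 := by norm_num
  have h5 : ∑ x ∈ Finset.Ico 0 1, (((2:ℝ)) ^ x)⁻¹ = 1 := by simp
  linarith

lemma cover_aux (N : ℕ → ℕ) (A B : ℕ) (hAB : A < B)
    (hcov : (1 : ℝ) ≤ ∑ i ∈ Finset.Ico A B, (N i : ℝ) * ((2:ℝ)⁻¹) ^ i)
    (f : ℝ) (hf0 : 0 ≤ f) (hf1 : f < 1) :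
    ∃ j, A ≤ j ∧ j < B ∧
      (∑ i ∈ Finset.Ico A j, N i * 2 ^ (j - i)) ≤ Nat.floor ((2:ℝ) ^ j * f) ∧
      Nat.floor ((2:ℝ) ^ j * f) < (∑ i ∈ Finset.Ico A j, N i * 2 ^ (j - i)) + N j := by
  classical
  set O : ℕ → ℕ := fun j => ∑ i ∈ Finset.Ico A j, N i * 2 ^ (j - i) with hO
  have hOreal : ∀ j, A ≤ j → ((O j + N j : ℕ) : ℝ) =
      (2:ℝ) ^ j * ∑ i ∈ Finset.Ico A (j + 1), (N i : ℝ) * ((2:ℝ)⁻¹) ^ i := by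
    intro j hj
    rw [Finset.sum_Ico_succ_top hj, mul_add, Finset.mul_sum, hO]
    push_cast
    congr 1
    · refine Finset.sum_congr rfl fun i hi => ?_
      have hij : i < j := (Finset.mem_Ico.mp hi).2
      have h2 : (2:ℝ) ^ j = (2:ℝ) ^ (j - i) * (2:ℝ) ^ i := by
        rw [← pow_add]
        congr 1
        omega
      rw [h2, inv_pow]
      field_simp
    · rw [inv_pow]
      field_simp
  have hOrec : ∀ j, A ≤ j → O (j + 1) = 2 * (O j + N j) := by
    intro j hj
    simp only [hO]
    rw [Finset.sum_Ico_succ_top hj]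
    have h1 : ∀ i ∈ Finset.Ico A j, N i * 2 ^ (j + 1 - i) = 2 * (N i * 2 ^ (j - i)) := by
      intro i hi
      have hij : i < j := (Finset.mem_Ico.mp hi).2
      have : j + 1 - i = (j - i) + 1 := by omega
      rw [this, pow_succ]
      ring
    rw [Finset.sum_congr rfl h1, ← Finset.mul_sum]
    have : j + 1 - j = 1 := by omega
    rw [this]
    ring
  set Q : ℕ → Prop := fun j => A ≤ j ∧ (2:ℝ) ^ j * f < ((O j + N j : ℕ) : ℝ) with hQ
  have hQB : Q (B - 1) := by
    refine ⟨by omega, ?_⟩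
    have hb : A ≤ B - 1 := by omega
    rw [hOreal _ hb]
    have hB1 : B - 1 + 1 = B := by omega
    rw [hB1]
    have hpos : (0:ℝ) < (2:ℝ) ^ (B - 1) := by positivity
    calc (2:ℝ) ^ (B - 1) * f < (2:ℝ) ^ (B - 1) * 1 := by
          exact mul_lt_mul_of_pos_left hf1 hpos
      _ ≤ _ := mul_le_mul_of_nonneg_left hcov hpos.le
  have hex : ∃ j, Q j := ⟨B - 1, hQB⟩
  set j := Nat.find hex with hjdef
  have hQj : Q j := Nat.find_spec hex
  have hjB : j < B := lt_of_le_of_lt (Nat.find_le hQB) (by omega)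
  refine ⟨j, hQj.1, hjB, ?_, ?_⟩
  · rcases eq_or_lt_of_le hQj.1 with h | h
    · have hz : O j = 0 := by
        simp [hO, ← h]
      show O j ≤ Nat.floor ((2:ℝ) ^ j * f)
      rw [hz]
      exact Nat.zero_le _
    · have h1 : A ≤ j - 1 := by omega
      have hnot : ¬ Q (j - 1) := Nat.find_min hex (by omega)
      have h2 : ((O (j - 1) + N (j - 1) : ℕ) : ℝ) ≤ (2:ℝ) ^ (j - 1) * f := by
        by_contra hcc
        exact hnot ⟨h1, not_le.mp hcc⟩
      have hrec := hOrec (j - 1) h1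
      have hj1 : j - 1 + 1 = j := by omega
      rw [hj1] at hrec
      apply Nat.le_floor
      show ((O j : ℕ) : ℝ) ≤ (2:ℝ) ^ j * f
      rw [hrec]
      have h2j : (2:ℝ) ^ j = 2 * (2:ℝ) ^ (j - 1) := by
        rw [← pow_succ']
        congr 1
        omega
      push_cast at h2 ⊢
      rw [h2j]
      nlinarith
  · rw [Nat.floor_lt (by positivity)]
    show (2:ℝ) ^ j * f < ((O j + N j : ℕ) : ℝ)
    exact hQj.2

lemma construction_aux (p : ℝ) (hp : 0 < p) (Ψp : ℕ → ℝ) (hΨp : ∀ j, 0 < Ψp j)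
    (a : ℕ → ℝ) (ha : ∀ j, 0 < a j) (hdiv : ¬ Summable a)
    (w : ℕ → ℝ) (hw : ∀ m, 0 < w m) (t : ℕ → ℝ) :
    ∃ (lam : ℕ → ℕ → ℝ) (n : ℕ → ℕ), n 0 = 1 ∧ StrictMono n ∧
      (∀ m, t m ≤ ∑ j ∈ Finset.Ico (n m) (n (m + 1)), a j) ∧
      (∀ j k, 0 ≤ lam j k) ∧
      (∀ k, lam 0 k = 0) ∧
      (∀ m, ∀ j ∈ Finset.Ico (n m) (n (m + 1)),
        (∑' k : ℕ, ENNReal.ofReal (lam j k ^ p)) ≤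
          ENNReal.ofReal (2 * a j * w m ^ p /
            ((∑ i ∈ Finset.Ico (n m) (n (m + 1)), a i) * Ψp j ^ p))) ∧
      (∀ x : ℝ, 1 ≤ x → x < 2 → ∀ m, ∃ j ∈ Finset.Ico (n m) (n (m + 1)),
        (2:ℝ) ^ ((j:ℝ) / p) * lam j (Nat.floor ((2:ℝ) ^ j * x)) * Ψp j = w m) := by
  classical
  obtain ⟨n, hn0, hmono, hblocks⟩ := blocks_aux a (fun j => (ha j).le) hdiv t
  set T : ℕ → ℝ := fun m => ∑ j ∈ Finset.Ico (n m) (n (m + 1)), a j with hTdef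
  have hTpos : ∀ m, 0 < T m := fun m => Finset.sum_pos (fun j _ => ha j)
    ⟨n m, Finset.mem_Ico.mpr ⟨le_refl _, hmono (Nat.lt_succ_self m)⟩⟩
  set blk : ℕ → ℕ := fun j => Nat.findGreatest (fun m => n m ≤ j) j with hblkdef
  have hblk : ∀ m j, n m ≤ j → j < n (m + 1) → blk j = m := by
    intro m j h1 h2
    rw [hblkdef]
    rw [Nat.findGreatest_eq_iff]
    refine ⟨le_trans hmono.le_apply h1, fun _ => h1, fun k hk _ => ?_⟩
    exact not_le.mpr (lt_of_lt_of_le h2 (hmono.monotone hk))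
  have hn1 : ∀ m, 1 ≤ n m := fun m => hn0 ▸ hmono.monotone (Nat.zero_le m)
  set Nf : ℕ → ℕ := fun j => Nat.floor ((2:ℝ) ^ (j + 1) * a j / T (blk j)) with hNf
  set v : ℕ → ℝ := fun j => (2:ℝ) ^ (-(j:ℝ) / p) * w (blk j) / Ψp j with hv
  have hvpos : ∀ j, 0 < v j := by
    intro j
    have h1 : (0:ℝ) < (2:ℝ) ^ (-(j:ℝ) / p) := Real.rpow_pos_of_pos two_pos _
    have := hw (blk j)
    have := hΨp j
    positivity
  set Of : ℕ → ℕ := fun j => ∑ i ∈ Finset.Ico (n (blk j)) j, Nf i * 2 ^ (j - i) with hOf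
  set lam : ℕ → ℕ → ℝ := fun j k =>
    if 1 ≤ j ∧ 2 ^ j + Of j ≤ k ∧ k < 2 ^ j + Of j + Nf j then v j else 0 with hlam
  have hnn : ∀ j k, 0 ≤ lam j k := by
    intro j k
    rw [hlam]
    dsimp only
    split
    · exact (hvpos j).le
    · exact le_refl 0
  have h0 : ∀ k, lam 0 k = 0 := by
    intro k
    rw [hlam]
    simp
  refine ⟨lam, n, hn0, hmono, hblocks, hnn, h0, ?_, ?_⟩
  · -- column bound
    intro m j hj
    rw [Finset.mem_Ico] at hj
    have hjm : blk j = m := hblk m j hj.1 hj.2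
    have hj1 : 1 ≤ j := le_trans (hn1 m) hj.1
    have hsupp : ∀ k ∉ Finset.Ico (2 ^ j + Of j) (2 ^ j + Of j + Nf j),
        ENNReal.ofReal (lam j k ^ p) = 0 := by
      intro k hk
      rw [Finset.mem_Ico] at hk
      have : lam j k = 0 := by
        rw [hlam]
        apply if_neg
        intro hcon
        exact hk ⟨hcon.2.1, hcon.2.2⟩
      rw [this, Real.zero_rpow hp.ne', ENNReal.ofReal_zero]
    rw [tsum_eq_sum hsupp]
    have hin : ∀ k ∈ Finset.Ico (2 ^ j + Of j) (2 ^ j + Of j + Nf j),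
        ENNReal.ofReal (lam j k ^ p) = ENNReal.ofReal (v j ^ p) := by
      intro k hk
      rw [Finset.mem_Ico] at hk
      rw [hlam]
      simp only []
      rw [if_pos ⟨hj1, hk.1, hk.2⟩]
    rw [Finset.sum_congr rfl hin, Finset.sum_const, Nat.card_Ico]
    have hcard : 2 ^ j + Of j + Nf j - (2 ^ j + Of j) = Nf j := by omega
    rw [hcard, nsmul_eq_mul]
    have hvp : v j ^ p = ((2:ℝ) ^ j)⁻¹ * (w m ^ p / Ψp j ^ p) := by
      rw [hv]
      simp only [hjm]
      rw [Real.div_rpow (mul_nonneg (Real.rpow_pos_of_pos two_pos _).le (hw m).le) (hΨp j).le,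
        Real.mul_rpow (Real.rpow_pos_of_pos two_pos _).le (hw m).le,
        ← Real.rpow_natCast (2:ℝ) j, ← Real.rpow_mul (by norm_num : (0:ℝ) ≤ 2),
        div_mul_cancel₀ _ hp.ne', Real.rpow_neg (by norm_num : (0:ℝ) ≤ 2)]
      ring
    have hNle : (Nf j : ℝ) ≤ (2:ℝ) ^ (j + 1) * a j / T m := by
      rw [hNf]
      simp only [hjm]
      exact Nat.floor_le (div_nonneg (mul_nonneg (by positivity) (ha j).le) (hTpos m).le)
    calc (Nf j : ℝ≥0∞) * ENNReal.ofReal (v j ^ p)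
        = ENNReal.ofReal ((Nf j : ℝ) * v j ^ p) := by
          rw [ENNReal.ofReal_mul (Nat.cast_nonneg _), ENNReal.ofReal_natCast]
      _ ≤ ENNReal.ofReal (((2:ℝ) ^ (j + 1) * a j / T m) * v j ^ p) := by
          apply ENNReal.ofReal_le_ofReal
          exact mul_le_mul_of_nonneg_right hNle (Real.rpow_nonneg (hvpos j).le p)
      _ = ENNReal.ofReal (2 * a j * w m ^ p / (T m * Ψp j ^ p)) := by
          congr 1
          rw [hvp]
          have h2 : (2:ℝ) ^ (j + 1) = 2 * 2 ^ j := by rw [pow_succ]; ring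
          have hΨ0 : Ψp j ^ p ≠ 0 := (Real.rpow_pos_of_pos (hΨp j) p).ne'
          have h2j : ((2:ℝ) ^ j) ≠ 0 := by positivity
          have hcanc : (2:ℝ) ^ j * ((2:ℝ) ^ j)⁻¹ = 1 := mul_inv_cancel₀ h2j
          linear_combination (2 * a j * (T m)⁻¹ * w m ^ p * (Ψp j ^ p)⁻¹) * hcanc
  · -- orbit
    intro x hx1 hx2 m
    have hAB : n m < n (m + 1) := hmono (Nat.lt_succ_self m)
    have hcov : (1:ℝ) ≤ ∑ i ∈ Finset.Ico (n m) (n (m + 1)), (Nf i : ℝ) * ((2:ℝ)⁻¹) ^ i := by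
      have hterm : ∀ i ∈ Finset.Ico (n m) (n (m + 1)),
          2 * a i / T m - ((2:ℝ)⁻¹) ^ i ≤ (Nf i : ℝ) * ((2:ℝ)⁻¹) ^ i := by
        intro i hi
        rw [Finset.mem_Ico] at hi
        have him : blk i = m := hblk m i hi.1 hi.2
        have hflo : (2:ℝ) ^ (i + 1) * a i / T m - 1 ≤ (Nf i : ℝ) := by
          rw [hNf]
          simp only [him]
          have := Nat.lt_floor_add_one ((2:ℝ) ^ (i + 1) * a i / T m)
          linarith
        have hpow : (0:ℝ) < ((2:ℝ)⁻¹) ^ i := by positivity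
        have key : ((2:ℝ) ^ (i + 1) * a i / T m - 1) * ((2:ℝ)⁻¹) ^ i
            = 2 * a i / T m - ((2:ℝ)⁻¹) ^ i := by
          have h21 : (2:ℝ) ^ (i + 1) * ((2:ℝ)⁻¹) ^ i = 2 := by
            rw [pow_succ, inv_pow]
            field_simp
          rw [sub_mul, one_mul]
          congr 1
          rw [div_mul_eq_mul_div, mul_right_comm, h21]
        calc 2 * a i / T m - ((2:ℝ)⁻¹) ^ i
            = ((2:ℝ) ^ (i + 1) * a i / T m - 1) * ((2:ℝ)⁻¹) ^ i := key.symm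
          _ ≤ (Nf i : ℝ) * ((2:ℝ)⁻¹) ^ i := mul_le_mul_of_nonneg_right hflo hpow.le
      have hsum := Finset.sum_le_sum hterm
      have hgeom := geom_tail_aux (n m) (n (m + 1)) (hn1 m)
      have hsplit : ∑ i ∈ Finset.Ico (n m) (n (m + 1)), (2 * a i / T m - ((2:ℝ)⁻¹) ^ i)
          = 2 - ∑ i ∈ Finset.Ico (n m) (n (m + 1)), ((2:ℝ)⁻¹) ^ i := by
        rw [Finset.sum_sub_distrib]
        congr 1
        rw [← Finset.sum_div, ← Finset.mul_sum]
        have hTm : ∑ i ∈ Finset.Ico (n m) (n (m + 1)), a i = T m := rfl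
        rw [hTm, mul_div_assoc, div_self (hTpos m).ne', mul_one]
      rw [hsplit] at hsum
      linarith
    set f : ℝ := x - 1 with hf
    obtain ⟨j, hjA, hjB, hlow, hhigh⟩ := cover_aux Nf (n m) (n (m + 1)) hAB hcov f
      (by linarith) (by linarith)
    have hjm : blk j = m := hblk m j hjA hjB
    have hOfj : Of j = ∑ i ∈ Finset.Ico (n m) j, Nf i * 2 ^ (j - i) := by
      rw [hOf]
      simp only [hjm]
    have hj1 : 1 ≤ j := le_trans (hn1 m) hjA
    refine ⟨j, Finset.mem_Ico.mpr ⟨hjA, hjB⟩, ?_⟩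
    have hfloor : Nat.floor ((2:ℝ) ^ j * x) = Nat.floor ((2:ℝ) ^ j * f) + 2 ^ j := by
      have h2x : (2:ℝ) ^ j * x = (2:ℝ) ^ j * f + ((2 ^ j : ℕ) : ℝ) := by
        push_cast
        ring
      rw [h2x, Nat.floor_add_natCast (mul_nonneg (by positivity) (by rw [hf]; linarith))]
    have hlamval : lam j (Nat.floor ((2:ℝ) ^ j * x)) = v j := by
      rw [hlam]
      simp only []
      rw [if_pos]
      rw [← hOfj] at hlow hhigh
      refine ⟨hj1, ?_, ?_⟩
      · rw [hfloor]
        omega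
      · rw [hfloor]
        omega
    rw [hlamval, hv]
    simp only [hjm]
    have h1 : (2:ℝ) ^ ((j:ℝ) / p) * ((2:ℝ) ^ (-(j:ℝ) / p) * w m / Ψp j) * Ψp j
        = ((2:ℝ) ^ ((j:ℝ) / p) * (2:ℝ) ^ (-(j:ℝ) / p)) * w m * (Ψp j / Ψp j) := by
      ring
    rw [h1, ← Real.rpow_add two_pos, div_self (hΨp j).ne']
    have hz : (j:ℝ) / p + -(j:ℝ) / p = 0 := by ring
    rw [hz, Real.rpow_zero, one_mul, mul_one]


/-- Weighted counterexample sequence (Lemma 3.7): for `0 < p < q ≤ ∞` and an admissible `Ψ`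
with `∑_j Ψ(2^{-j})^χ = ∞` (`χ = qp/(q-p)`, resp. `χ = p` if `q = ∞`), assuming in addition
`χ < 1/c_∞` when `q < ∞` and `Ψ` is increasing, there is a nonnegative sequence
`(λ_{j,k}) ∈ b_{p,q}` with `(∑_j 2^{jq/p} λ_{j,⌊2^j x⌋}^q Ψ(2^{-j})^q)^{1/q} = ∞` for every
`x ∈ [1,2)` (usual modification if `q = ∞`). -/
theorem exists_weighted_bpq_orbit_divergent (p : ℝ) (q : ℝ≥0∞) (hp : 0 < p)
    (hpq : ENNReal.ofReal p < q) (Ψ : ℝ → ℝ) (hΨ : Admissible Ψ)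
    (hdiv : ¬ Summable (fun j : ℕ =>
      Ψ ((2 : ℝ) ^ (-(j : ℝ))) ^ (if q = ⊤ then p else q.toReal * p / (q.toReal - p))))
    (hextra : q ≠ ⊤ → MonotoneOn Ψ (Set.Ioc (0 : ℝ) 1) →
      (if q = ⊤ then p else q.toReal * p / (q.toReal - p)) <
        1 / sSup ((fun t => Real.logb 2 (Ψ t / Ψ (t ^ 2))) '' Set.Ioc (0 : ℝ) 1)) :
    ∃ lam : ℕ → ℕ → ℝ, (∀ j k, 0 ≤ lam j k) ∧
      (if q = ⊤ then
          ⨆ j : ℕ, ∑' k : ℕ, ENNReal.ofReal (lam j k ^ p)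
        else
          ∑' j : ℕ, (∑' k : ℕ, ENNReal.ofReal (lam j k ^ p)) ^ (q.toReal / p)) < ⊤ ∧
      ∀ x ∈ Set.Ico (1 : ℝ) 2,
        (if q = ⊤ then
            ⨆ j : ℕ, ENNReal.ofReal ((2 : ℝ) ^ ((j : ℝ) / p) *
              lam j (Nat.floor ((2 : ℝ) ^ j * x)) * Ψ ((2 : ℝ) ^ (-(j : ℝ))))
          else
            ∑' j : ℕ, ENNReal.ofReal ((2 : ℝ) ^ ((j : ℝ) / p) *
              lam j (Nat.floor ((2 : ℝ) ^ j * x)) * Ψ ((2 : ℝ) ^ (-(j : ℝ)))) ^ q.toReal) = ⊤ := by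
  classical
  have hΨpos : ∀ j : ℕ, 0 < Ψ ((2 : ℝ) ^ (-(j : ℝ))) := by
    intro j
    refine hΨ.1 _ ⟨Real.rpow_pos_of_pos two_pos _, ?_⟩
    exact Real.rpow_le_one_of_one_le_of_nonpos one_le_two (neg_nonpos.mpr (Nat.cast_nonneg j))
  by_cases hq : q = ⊤
  · subst hq
    simp only [eq_self_iff_true, if_true] at hdiv ⊢
    obtain ⟨lam, n, hn0, hmono, hblocks, hnn, h0, hcol, horb⟩ :=
      construction_aux p hp (fun j => Ψ ((2:ℝ) ^ (-(j:ℝ)))) hΨpos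
        (fun j => Ψ ((2:ℝ) ^ (-(j:ℝ))) ^ p) (fun j => Real.rpow_pos_of_pos (hΨpos j) p) hdiv
        (fun m => (m:ℝ) + 1) (fun m => by positivity) (fun m => ((m:ℝ) + 1) ^ p)
    refine ⟨lam, hnn, ?_, ?_⟩
    · refine lt_of_le_of_lt (iSup_le fun j => ?_) (ENNReal.ofReal_lt_top (r := 2))
      rcases Nat.eq_zero_or_pos j with rfl | hj
      · have hz : ∀ k : ℕ, ENNReal.ofReal (lam 0 k ^ p) = 0 := fun k => by
          rw [h0 k, Real.zero_rpow hp.ne', ENNReal.ofReal_zero]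
        rw [tsum_congr hz, tsum_zero]
        exact zero_le
      · obtain ⟨m, hm1, hm2⟩ := mem_block_aux n hn0 hmono j hj
        refine le_trans (hcol m j (Finset.mem_Ico.mpr ⟨hm1, hm2⟩)) (ENNReal.ofReal_le_ofReal ?_)
        have hT := hblocks m
        have hΨj : (0:ℝ) < Ψ ((2:ℝ) ^ (-(j:ℝ))) ^ p := Real.rpow_pos_of_pos (hΨpos j) p
        have hmp : (0:ℝ) < ((m:ℝ) + 1) ^ p := Real.rpow_pos_of_pos (by positivity) p
        have hTpos : (0:ℝ) < ∑ i ∈ Finset.Ico (n m) (n (m+1)), Ψ ((2:ℝ) ^ (-(i:ℝ))) ^ p :=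
          lt_of_lt_of_le hmp hT
        rw [div_le_iff₀ (mul_pos hTpos hΨj)]
        nlinarith [mul_le_mul_of_nonneg_left hT (mul_nonneg (by norm_num : (0:ℝ) ≤ 2) hΨj.le)]
    · intro x hx
      obtain ⟨hx1, hx2⟩ := hx
      rw [iSup_eq_top]
      intro b hb
      obtain ⟨M, hM⟩ := exists_nat_gt b.toReal
      obtain ⟨j, hjmem, hjval⟩ := horb x hx1 hx2 M
      refine ⟨j, ?_⟩
      rw [hjval]
      conv_lhs => rw [← ENNReal.ofReal_toReal hb.ne]
      exact (ENNReal.ofReal_lt_ofReal_iff (by positivity)).mpr (by push_cast; linarith)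
  · simp only [if_neg hq] at hdiv ⊢
    have hplt : p < q.toReal := by
      have h1 : ENNReal.ofReal p < ENNReal.ofReal q.toReal := by
        rwa [ENNReal.ofReal_toReal hq]
      exact (ENNReal.ofReal_lt_ofReal_iff_of_nonneg hp.le).mp h1
    set qr := q.toReal with hqr
    have hqr0 : 0 < qr := lt_trans hp hplt
    set s := qr / p with hs
    have hs1 : 1 < s := (one_lt_div hp).mpr hplt
    have hs0 : (0:ℝ) < s := by linarith
    set χ := qr * p / (qr - p) with hχ
    have hχpos : 0 < χ := div_pos (mul_pos hqr0 hp) (by linarith)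
    have hχid : χ * (s - 1) = p * s := by
      have hd1 : qr - p ≠ 0 := ne_of_gt (by linarith)
      rw [hχ, hs]
      field_simp
    have hexp : (χ - p) * s = χ := by linear_combination hχid
    obtain ⟨lam, n, hn0, hmono, hblocks, hnn, h0, hcol, horb⟩ :=
      construction_aux p hp (fun j => Ψ ((2:ℝ) ^ (-(j:ℝ)))) hΨpos
        (fun j => Ψ ((2:ℝ) ^ (-(j:ℝ))) ^ χ) (fun j => Real.rpow_pos_of_pos (hΨpos j) χ) hdiv
        (fun _ => 1) (fun _ => one_pos) (fun m => (2:ℝ) ^ (m + 1))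
    have hTpos : ∀ m, (0:ℝ) < ∑ i ∈ Finset.Ico (n m) (n (m+1)), Ψ ((2:ℝ) ^ (-(i:ℝ))) ^ χ :=
      fun m => lt_of_lt_of_le (by positivity) (hblocks m)
    refine ⟨lam, hnn, ?_, ?_⟩
    · set F : ℕ → ℝ≥0∞ := fun j => (∑' k : ℕ, ENNReal.ofReal (lam j k ^ p)) ^ s with hF
      have hF0 : F 0 = 0 := by
        have hz : ∀ k : ℕ, ENNReal.ofReal (lam 0 k ^ p) = 0 := fun k => by
          rw [h0 k, Real.zero_rpow hp.ne', ENNReal.ofReal_zero]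
        rw [hF]
        simp only []
        rw [tsum_congr hz, tsum_zero, ENNReal.zero_rpow_of_pos hs0]
      have hFblock : ∀ m, ∀ j ∈ Finset.Ico (n m) (n (m+1)),
          F j ≤ ENNReal.ofReal ((2:ℝ) ^ s * Ψ ((2:ℝ) ^ (-(j:ℝ))) ^ χ /
            (∑ i ∈ Finset.Ico (n m) (n (m+1)), Ψ ((2:ℝ) ^ (-(i:ℝ))) ^ χ) ^ s) := by
        intro m j hj
        have h1 := hcol m j hj
        have hΨj := hΨpos j
        have hΨχ : (0:ℝ) < Ψ ((2:ℝ) ^ (-(j:ℝ))) ^ χ := Real.rpow_pos_of_pos hΨj χ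
        have hΨp' : (0:ℝ) < Ψ ((2:ℝ) ^ (-(j:ℝ))) ^ p := Real.rpow_pos_of_pos hΨj p
        have h2 : F j ≤ (ENNReal.ofReal (2 * Ψ ((2:ℝ) ^ (-(j:ℝ))) ^ χ * (1:ℝ) ^ p /
            ((∑ i ∈ Finset.Ico (n m) (n (m+1)), Ψ ((2:ℝ) ^ (-(i:ℝ))) ^ χ) *
              Ψ ((2:ℝ) ^ (-(j:ℝ))) ^ p))) ^ s := by
          rw [hF]
          exact ENNReal.rpow_le_rpow h1 hs0.le
        have hnum : (0:ℝ) ≤ 2 * Ψ ((2:ℝ) ^ (-(j:ℝ))) ^ χ * (1:ℝ) ^ p /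
            ((∑ i ∈ Finset.Ico (n m) (n (m+1)), Ψ ((2:ℝ) ^ (-(i:ℝ))) ^ χ) *
              Ψ ((2:ℝ) ^ (-(j:ℝ))) ^ p) :=
          div_nonneg (mul_nonneg (mul_nonneg (by norm_num) (Real.rpow_nonneg hΨj.le χ))
            (by norm_num)) (mul_nonneg (hTpos m).le (Real.rpow_nonneg hΨj.le p))
        rw [ENNReal.ofReal_rpow_of_nonneg hnum hs0.le] at h2
        refine h2.trans (ENNReal.ofReal_le_ofReal (le_of_eq ?_))
        rw [Real.one_rpow, mul_one]
        have hTm := hTpos m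
        have key1 : 2 * Ψ ((2:ℝ) ^ (-(j:ℝ))) ^ χ /
            ((∑ i ∈ Finset.Ico (n m) (n (m+1)), Ψ ((2:ℝ) ^ (-(i:ℝ))) ^ χ) *
              Ψ ((2:ℝ) ^ (-(j:ℝ))) ^ p)
            = 2 * Ψ ((2:ℝ) ^ (-(j:ℝ))) ^ (χ - p) /
              (∑ i ∈ Finset.Ico (n m) (n (m+1)), Ψ ((2:ℝ) ^ (-(i:ℝ))) ^ χ) := by
          rw [Real.rpow_sub hΨj]
          field_simp
        rw [key1, Real.div_rpow (mul_nonneg (by norm_num) (Real.rpow_nonneg hΨj.le _)) hTm.le,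
          Real.mul_rpow (by norm_num) (Real.rpow_nonneg hΨj.le _),
          ← Real.rpow_mul hΨj.le, hexp]
      set r : ℝ≥0∞ := ENNReal.ofReal ((2:ℝ) ^ ((1:ℝ) - s)) with hr
      have hrlt : r < 1 := by
        rw [hr, ← ENNReal.ofReal_one]
        exact (ENNReal.ofReal_lt_ofReal_iff one_pos).mpr
          (Real.rpow_lt_one_of_one_lt_of_neg one_lt_two (by linarith))
      have hblocksum : ∀ m, ∑ j ∈ Finset.Ico (n m) (n (m+1)), F j ≤
          ENNReal.ofReal ((2:ℝ) ^ s) * r ^ (m+1) := by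
        intro m
        have hTm := hTpos m
        calc ∑ j ∈ Finset.Ico (n m) (n (m+1)), F j
            ≤ ∑ j ∈ Finset.Ico (n m) (n (m+1)), ENNReal.ofReal ((2:ℝ) ^ s *
                Ψ ((2:ℝ) ^ (-(j:ℝ))) ^ χ /
                (∑ i ∈ Finset.Ico (n m) (n (m+1)), Ψ ((2:ℝ) ^ (-(i:ℝ))) ^ χ) ^ s) :=
              Finset.sum_le_sum (hFblock m)
          _ = ENNReal.ofReal (∑ j ∈ Finset.Ico (n m) (n (m+1)), (2:ℝ) ^ s *
                Ψ ((2:ℝ) ^ (-(j:ℝ))) ^ χ /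
                (∑ i ∈ Finset.Ico (n m) (n (m+1)), Ψ ((2:ℝ) ^ (-(i:ℝ))) ^ χ) ^ s) := by
              rw [ENNReal.ofReal_sum_of_nonneg]
              intro j _
              exact div_nonneg (mul_nonneg (Real.rpow_nonneg (by norm_num) s)
                (Real.rpow_nonneg (hΨpos j).le χ)) (Real.rpow_nonneg (hTpos m).le s)
          _ = ENNReal.ofReal ((2:ℝ) ^ s *
                (∑ i ∈ Finset.Ico (n m) (n (m+1)), Ψ ((2:ℝ) ^ (-(i:ℝ))) ^ χ) ^ ((1:ℝ) - s)) := by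
              congr 1
              rw [← Finset.sum_div, ← Finset.mul_sum, Real.rpow_sub hTm, Real.rpow_one,
                mul_div_assoc]
          _ ≤ ENNReal.ofReal ((2:ℝ) ^ s * ((2:ℝ) ^ (m+1)) ^ ((1:ℝ) - s)) := by
              apply ENNReal.ofReal_le_ofReal
              apply mul_le_mul_of_nonneg_left _ (Real.rpow_nonneg (by norm_num) s)
              exact Real.rpow_le_rpow_of_nonpos (by positivity) (hblocks m) (by linarith)
          _ = ENNReal.ofReal ((2:ℝ) ^ s) * r ^ (m+1) := by
              rw [ENNReal.ofReal_mul (Real.rpow_nonneg (by norm_num) s)]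
              congr 1
              rw [hr, ← ENNReal.ofReal_pow (Real.rpow_nonneg (by norm_num) _)]
              congr 1
              rw [← Real.rpow_natCast ((2:ℝ) ^ ((1:ℝ) - s)) (m+1),
                ← Real.rpow_natCast (2:ℝ) (m+1),
                ← Real.rpow_mul (by norm_num : (0:ℝ) ≤ 2),
                ← Real.rpow_mul (by norm_num : (0:ℝ) ≤ 2)]
              congr 1
              ring
      have htel : ∀ M, ∑ j ∈ Finset.range (n M), F j ≤
          ENNReal.ofReal ((2:ℝ) ^ s) * ∑ m ∈ Finset.range M, r ^ (m+1) := by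
        intro M
        induction M with
        | zero =>
            rw [hn0, Finset.range_one, Finset.sum_singleton, hF0]
            exact zero_le
        | succ M ih =>
            have hsplit : ∑ j ∈ Finset.range (n (M+1)), F j
                = ∑ j ∈ Finset.range (n M), F j + ∑ j ∈ Finset.Ico (n M) (n (M+1)), F j := by
              rw [Finset.range_eq_Ico, Finset.range_eq_Ico]
              exact (Finset.sum_Ico_consecutive _ (Nat.zero_le _)
                (hmono (Nat.lt_succ_self M)).le).symm
            rw [hsplit, Finset.sum_range_succ, mul_add]
            exact add_le_add ih (hblocksum M)
      have hgeom : (∑' m : ℕ, r ^ (m+1)) < ⊤ := by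
        have h1 : (∑' m : ℕ, r ^ (m+1)) ≤ ∑' m : ℕ, r ^ m := by
          apply ENNReal.tsum_le_tsum
          intro m
          rw [pow_succ]
          calc r ^ m * r ≤ r ^ m * 1 := mul_le_mul_right hrlt.le _
            _ = r ^ m := mul_one _
        rw [ENNReal.tsum_geometric] at h1
        exact lt_of_le_of_lt h1 (ENNReal.inv_lt_top.mpr (tsub_pos_of_lt hrlt))
      have hCfin : ENNReal.ofReal ((2:ℝ) ^ s) * (∑' m : ℕ, r ^ (m+1)) < ⊤ :=
        ENNReal.mul_lt_top ENNReal.ofReal_lt_top hgeom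
      refine lt_of_le_of_lt ?_ hCfin
      rw [ENNReal.tsum_eq_iSup_sum]
      apply iSup_le
      intro fs
      obtain ⟨M, hM⟩ := fs.exists_nat_subset_range
      calc ∑ j ∈ fs, F j ≤ ∑ j ∈ Finset.range M, F j := Finset.sum_le_sum_of_subset hM
        _ ≤ ∑ j ∈ Finset.range (n M), F j := by
            apply Finset.sum_le_sum_of_subset
            intro i hi
            rw [Finset.mem_range] at hi ⊢
            exact lt_of_lt_of_le hi hmono.le_apply
        _ ≤ ENNReal.ofReal ((2:ℝ) ^ s) * ∑ m ∈ Finset.range M, r ^ (m+1) := htel M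
        _ ≤ _ := mul_le_mul_right (ENNReal.sum_le_tsum _) _
    · intro x hx
      obtain ⟨hx1, hx2⟩ := hx
      have htop : (∑' j : ℕ, ENNReal.ofReal ((2:ℝ) ^ ((j:ℝ) / p) *
          lam j (Nat.floor ((2:ℝ) ^ j * x)) * Ψ ((2:ℝ) ^ (-(j:ℝ)))) ^ qr) = ⊤ := by
        choose jm hjm1 hjm2 using horb x hx1 hx2
        have hinj : Function.Injective jm := by
          have hlt : ∀ m, jm m < n (m+1) := fun m => (Finset.mem_Ico.mp (hjm1 m)).2
          have hge : ∀ m, n m ≤ jm m := fun m => (Finset.mem_Ico.mp (hjm1 m)).1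
          intro m1 m2 he
          by_contra hne
          rcases Nat.lt_or_ge m1 m2 with h | h
          · have h2 := lt_of_lt_of_le (hlt m1) (hmono.monotone (by omega : m1 + 1 ≤ m2))
            have := hge m2
            omega
          · have hlt' : m2 < m1 := by omega
            have h2 := lt_of_lt_of_le (hlt m2) (hmono.monotone (by omega : m2 + 1 ≤ m1))
            have := hge m1
            omega
        apply top_le_iff.mp
        calc (⊤ : ℝ≥0∞) = ∑' _ : ℕ, (1 : ℝ≥0∞) :=
              (ENNReal.tsum_const_eq_top_of_ne_zero one_ne_zero).symm
          _ = ∑' m : ℕ, ENNReal.ofReal ((2:ℝ) ^ ((jm m : ℝ) / p) *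
                lam (jm m) (Nat.floor ((2:ℝ) ^ (jm m) * x)) * Ψ ((2:ℝ) ^ (-(jm m : ℝ)))) ^ qr := by
              apply tsum_congr
              intro m
              rw [hjm2 m, ENNReal.ofReal_one, ENNReal.one_rpow]
          _ ≤ _ := ENNReal.tsum_comp_le_tsum_of_injective hinj
                (fun j => ENNReal.ofReal ((2:ℝ) ^ ((j:ℝ) / p) *
                  lam j (Nat.floor ((2:ℝ) ^ j * x)) * Ψ ((2:ℝ) ^ (-(j:ℝ)))) ^ qr)
      exact htop
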